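/- arXiv:2210.03605 — 3 statements merged into one kernel-verified Lean document; each statement's English description precedes it below -/
import Mathlib

section
/- Let p, q ≥ 2 be integers. Let f : ℂ → ℂ be an entire function whose zero set f⁻¹(0) is infinite and all of whose zeros are simple, and let g : ℂ → ℂ be an entire function all of whose zeros are simple, such that A := g⁻¹(0) is a nonempty subset of f⁻¹(0) and A is either infinite or finite of even cardinality. Then the fiber product S(f,g) = {(z₁,z₂,z₃) ∈ ℂ³ : z₂^p = f(z₁) and z₃^q = g(z₁)} is a connected subset of ℂ³. -/
open Complex Set Filter Topology

noncomputable section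

private lemma pow_root_eq {p : ℕ} (hp : p ≠ 0) {z : ℂ} (hz : z ≠ 0) :
    Complex.exp (Complex.log z / p) ^ p = z := by
  have hp' : (p : ℂ) ≠ 0 := Nat.cast_ne_zero.mpr hp
  rw [← Complex.exp_nat_mul, mul_comm, div_mul_cancel₀ _ hp', Complex.exp_log hz]

private lemma mem_slitPlane_of_near_one {z : ℂ} (h : ‖z - 1‖ < 1) :
    z ∈ Complex.slitPlane := by
  rw [Complex.mem_slitPlane_iff]
  left
  have h1 : |(z - 1).re| ≤ ‖z - 1‖ := Complex.abs_re_le_norm _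
  have h2 : -|(z - 1).re| ≤ (z - 1).re := neg_abs_le _
  have h3 : (z - 1).re = z.re - 1 := by simp [Complex.sub_re]
  linarith

private lemma glueIf {u v : ℝ → ℂ} {s : Set ℝ} {m : ℝ}
    (hu : ContinuousOn u (s ∩ Iic m)) (hv : ContinuousOn v (s ∩ Ici m))
    (heq : u m = v m) :
    ContinuousOn (fun t => if t ≤ m then u t else v t) s := by
  intro t₀ ht₀
  set w := fun t => if t ≤ m then u t else v t with hw
  have hequ : EqOn w u (s ∩ Iic m) := fun t ht => if_pos ht.2
  have heqv : EqOn w v (s ∩ Ici m) := by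
    intro t ht
    rcases lt_or_eq_of_le (mem_Ici.mp ht.2 : m ≤ t) with h | h
    · exact if_neg (not_le.mpr h)
    · simp only [hw, ← h, le_refl, if_pos, heq]
  rcases lt_trichotomy t₀ m with h | h | h
  · have h1 : ContinuousWithinAt w (s ∩ Iic m) t₀ :=
      ((hu t₀ ⟨ht₀, le_of_lt h⟩).congr hequ (hequ ⟨ht₀, le_of_lt h⟩))
    refine h1.mono_of_mem_nhdsWithin ?_
    rw [mem_nhdsWithin]
    exact ⟨Iio m, isOpen_Iio, h, fun t ht => ⟨ht.2, mem_Iic.mpr ht.1.le⟩⟩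
  · subst h
    have h1 : ContinuousWithinAt w (s ∩ Iic t₀) t₀ :=
      (hu t₀ ⟨ht₀, mem_Iic.mpr le_rfl⟩).congr hequ (hequ ⟨ht₀, mem_Iic.mpr le_rfl⟩)
    have h2 : ContinuousWithinAt w (s ∩ Ici t₀) t₀ :=
      (hv t₀ ⟨ht₀, mem_Ici.mpr le_rfl⟩).congr heqv (heqv ⟨ht₀, mem_Ici.mpr le_rfl⟩)
    exact (h1.union h2).mono (fun t ht => (le_total t t₀).elim (fun h => Or.inl ⟨ht, h⟩)
      (fun h => Or.inr ⟨ht, h⟩))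
  · have h1 : ContinuousWithinAt w (s ∩ Ici m) t₀ :=
      ((hv t₀ ⟨ht₀, le_of_lt h⟩).congr heqv (heqv ⟨ht₀, le_of_lt h⟩))
    refine h1.mono_of_mem_nhdsWithin ?_
    rw [mem_nhdsWithin]
    exact ⟨Ioi m, isOpen_Ioi, h, fun t ht => ⟨ht.2, mem_Ici.mpr ht.1.le⟩⟩

private lemma tendsto_zero_of_pow {p : ℕ} (hp : p ≠ 0) {W φ : ℝ → ℂ} {l : Filter ℝ}
    (hpow : ∀ᶠ t in l, W t ^ p = φ t) (hφ : Tendsto φ l (𝓝 0)) :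
    Tendsto W l (𝓝 0) := by
  rw [tendsto_zero_iff_norm_tendsto_zero]
  have h1 : Tendsto (fun t => ‖φ t‖) l (𝓝 0) := by
    simpa using hφ.norm
  have h2 : ContinuousAt (fun x : ℝ => x ^ ((p : ℝ)⁻¹)) 0 :=
    Real.continuousAt_rpow_const 0 _ (Or.inr (by positivity))
  have h3 : Tendsto (fun t => ‖φ t‖ ^ ((p : ℝ)⁻¹)) l (𝓝 0) := by
    have := h2.tendsto.comp h1
    simpa [Function.comp_def, Real.zero_rpow (by exact_mod_cast inv_ne_zero (Nat.cast_ne_zero.mpr hp) : ((p:ℝ))⁻¹ ≠ 0)] using this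
  refine h3.congr' ?_
  filter_upwards [hpow] with t ht
  have : ‖W t‖ ^ p = ‖φ t‖ := by rw [← norm_pow, ht]
  rw [← this, Real.pow_rpow_inv_natCast (norm_nonneg _) hp]

private lemma lift_unique {p : ℕ} (hp : p ≠ 0) {φ W W' : ℝ → ℂ} {c e : ℝ}
    (hce : c ≤ e)
    (hW : ContinuousOn W (Icc c e)) (hW' : ContinuousOn W' (Icc c e))
    (hWp : ∀ t ∈ Icc c e, W t ^ p = φ t) (hW'p : ∀ t ∈ Icc c e, W' t ^ p = φ t)
    (hφ : ∀ t ∈ Icc c e, φ t ≠ 0) (hcc : W c = W' c) :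
    ∀ t ∈ Icc c e, W t = W' t := by
  have hW'ne : ∀ t ∈ Icc c e, W' t ≠ 0 := by
    intro t ht
    have := hW'p t ht
    intro h0
    exact hφ t ht (by rw [← this, h0, zero_pow hp])
  have hF : {z : ℂ | z ^ p = 1}.Finite := by
    refine Set.Finite.subset (Polynomial.nthRoots p (1 : ℂ)).toFinset.finite_toSet ?_
    intro z hz
    simp only [Multiset.mem_toFinset, Finset.mem_coe]
    exact (Polynomial.mem_nthRoots (Nat.pos_of_ne_zero hp)).mpr hz
  haveI : Finite ↥{z : ℂ | z ^ p = 1} := hF.to_subtype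
  haveI : PreconnectedSpace ↥(Icc c e) := Subtype.preconnectedSpace isPreconnected_Icc
  set R : ↥(Icc c e) → ↥{z : ℂ | z ^ p = 1} := fun x =>
    ⟨W x / W' x, by
      simp only [mem_setOf_eq, div_pow, hWp x.1 x.2, hW'p x.1 x.2]
      exact div_self (hφ x.1 x.2)⟩ with hR
  have hRc : Continuous R := by
    refine Continuous.subtype_mk ?_ _
    exact (hW.restrict).div (hW'.restrict) (fun x => hW'ne x.1 x.2)
  have hlc : IsLocallyConstant R := (IsLocallyConstant.iff_continuous R).mpr hRc
  intro t ht
  have h1 := hlc.apply_eq_of_preconnectedSpace ⟨t, ht⟩ ⟨c, left_mem_Icc.mpr hce⟩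
  have h2 : W t / W' t = W c / W' c := congrArg Subtype.val h1
  rw [hcc, div_self (hW'ne c (left_mem_Icc.mpr hce))] at h2
  have := hW'ne t ht
  field_simp at h2
  exact h2

private lemma lift_Icc {p : ℕ} (hp : p ≠ 0) {φ : ℝ → ℂ} (hφc : Continuous φ)
    {c d : ℝ} (hcd : c ≤ d) (hφ : ∀ t ∈ Icc c d, φ t ≠ 0)
    {w₀ : ℂ} (hw₀ : w₀ ^ p = φ c) :
    ∃ W : ℝ → ℂ, ContinuousOn W (Icc c d) ∧ W c = w₀ ∧ ∀ t ∈ Icc c d, W t ^ p = φ t := by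
  -- minimum of |φ| on the interval
  obtain ⟨tm, htm, hmin⟩ := isCompact_Icc.exists_isMinOn (α := ℝ) ⟨c, left_mem_Icc.mpr hcd⟩
    ((continuous_norm.comp hφc).continuousOn)
  set ε : ℝ := ‖φ tm‖ with hε
  have hεpos : 0 < ε := by
    rw [hε]
    exact norm_pos_iff.mpr (hφ tm htm)
  have hεle : ∀ t ∈ Icc c d, ε ≤ ‖φ t‖ := fun t ht => hmin ht
  -- uniform continuity
  have huc : UniformContinuousOn φ (Icc c d) :=
    isCompact_Icc.uniformContinuousOn_of_continuous hφc.continuousOn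
  obtain ⟨δ, hδpos, hδ⟩ := (Metric.uniformContinuousOn_iff.mp huc) ε hεpos
  set T : Set ℝ := {u | u ∈ Icc c d ∧ ∃ W : ℝ → ℂ, ContinuousOn W (Icc c u) ∧ W c = w₀ ∧
    ∀ t ∈ Icc c u, W t ^ p = φ t} with hT
  have hcT : c ∈ T := by
    refine ⟨left_mem_Icc.mpr hcd, fun _ => w₀, continuousOn_const, rfl, ?_⟩
    intro t ht
    have : t = c := le_antisymm ht.2 ht.1
    rw [this, hw₀]
  have hTd : ∀ u ∈ T, u ≤ d := fun u hu => hu.1.2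
  -- extension step
  have ext : ∀ u ∈ T, ∀ v ∈ Icc c d, u ≤ v → v - u < δ → v ∈ T := by
    rintro u ⟨huI, W, hWc, hWa, hWp⟩ v hvI huv hvu
    refine ⟨hvI, fun t => if t ≤ u then W t else W u * Complex.exp (Complex.log (φ t / φ u) / p),
      ?_, ?_, ?_⟩
    · -- continuity
      have hsub1 : Icc c v ∩ Iic u ⊆ Icc c u := fun t ht => ⟨ht.1.1, ht.2⟩
      have hsub2 : Icc c v ∩ Ici u ⊆ Icc u v := fun t ht => ⟨ht.2, ht.1.2⟩
      have hslit : ∀ t ∈ Icc u v, φ t / φ u ∈ Complex.slitPlane := by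
        intro t ht
        have htI : t ∈ Icc c d := ⟨le_trans huI.1 ht.1, le_trans ht.2 hvI.2⟩
        have hd : dist t u < δ := by
          rw [Real.dist_eq, _root_.abs_of_nonneg (sub_nonneg.mpr ht.1)]
          linarith [ht.2]
        have hnum : ‖φ t - φ u‖ < ε := by
          have := hδ t htI u huI hd
          rwa [Complex.dist_eq] at this
        apply mem_slitPlane_of_near_one
        have hφu : φ u ≠ 0 := hφ u huI
        have heq2 : φ t / φ u - 1 = (φ t - φ u) / φ u := by field_simp
        rw [heq2, norm_div]
        rw [div_lt_one (norm_pos_iff.mpr hφu)]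
        exact lt_of_lt_of_le hnum (hεle u huI)
      refine glueIf (hWc.mono hsub1) (ContinuousOn.mono ?_ hsub2) ?_
      · refine continuousOn_const.mul ?_
        exact (((hφc.continuousOn).div_const _).clog hslit).div_const _ |>.cexp
      · have : φ u / φ u = 1 := div_self (hφ u huI)
        rw [this, Complex.log_one, zero_div, Complex.exp_zero, mul_one]
    · simp only [if_pos (huI.1 : c ≤ u)]
      exact hWa
    · intro t ht
      by_cases htu : t ≤ u
      · simp only [if_pos htu]
        exact hWp t ⟨ht.1, htu⟩
      · simp only [if_neg htu]
        push_neg at htu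
        have htI : t ∈ Icc c d := ⟨ht.1, le_trans ht.2 hvI.2⟩
        have hne : φ t / φ u ≠ 0 := div_ne_zero (hφ t htI) (hφ u huI)
        rw [mul_pow, pow_root_eq hp hne, hWp u ⟨huI.1, le_refl u⟩,
          mul_div_assoc']
        exact mul_div_cancel_left₀ _ (hφ u huI)
  -- supremum argument
  have hTne : T.Nonempty := ⟨c, hcT⟩
  have hbdd : BddAbove T := ⟨d, hTd⟩
  set u₀ := sSup T with hu₀
  have hcu₀ : c ≤ u₀ := le_csSup hbdd hcT
  have hu₀d : u₀ ≤ d := csSup_le hTne hTd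
  have hu₀T : u₀ ∈ T := by
    obtain ⟨u, huT, hlt⟩ := exists_lt_of_lt_csSup hTne (by linarith : u₀ - δ/2 < u₀)
    have huu₀ : u ≤ u₀ := le_csSup hbdd huT
    exact ext u huT u₀ ⟨hcu₀, hu₀d⟩ huu₀ (by linarith)
  have hu₀eq : u₀ = d := by
    by_contra hne
    have hlt : u₀ < d := lt_of_le_of_ne hu₀d hne
    set v := min d (u₀ + δ/2) with hv
    have hu₀v : u₀ < v := lt_min hlt (by linarith)
    have hvT : v ∈ T := by
      refine ext u₀ hu₀T v ⟨le_trans hcu₀ hu₀v.le, min_le_left _ _⟩ hu₀v.le ?_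
      have : v ≤ u₀ + δ/2 := min_le_right _ _
      linarith
    exact absurd (le_csSup hbdd hvT) (not_le.mpr hu₀v)
  obtain ⟨_, W, h1, h2, h3⟩ := hu₀T
  exact ⟨W, by rwa [← hu₀eq], h2, by rwa [← hu₀eq]⟩

private lemma lift_Ico {p : ℕ} (hp : p ≠ 0) {φ : ℝ → ℂ} (hφc : Continuous φ)
    {c b : ℝ} (hcb : c < b) (hφ : ∀ t ∈ Ico c b, φ t ≠ 0)
    {w₀ : ℂ} (hw₀ : w₀ ^ p = φ c) :
    ∃ W : ℝ → ℂ, ContinuousOn W (Ico c b) ∧ W c = w₀ ∧ ∀ t ∈ Ico c b, W t ^ p = φ t := by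
  classical
  set d : ℕ → ℝ := fun n => b - (b - c) / (n + 1) with hd
  have hbc : 0 < b - c := sub_pos.mpr hcb
  have hd0 : d 0 = c := by simp [hd]
  have hcd : ∀ n, c ≤ d n := by
    intro n
    have h1 : (b - c) / (n + 1) ≤ (b - c) / 1 := by
      apply div_le_div_of_nonneg_left hbc.le one_pos
      exact_mod_cast Nat.succ_le_succ (Nat.zero_le n)
    simp only [hd, div_one] at h1 ⊢
    linarith
  have hdb : ∀ n, d n < b := by
    intro n
    have : 0 < (b - c) / (n + 1) := by positivity
    simp only [hd]
    linarith
  have hmono : ∀ n m, n ≤ m → d n ≤ d m := by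
    intro n m hnm
    simp only [hd]
    have : (b - c) / (m + 1) ≤ (b - c) / (n + 1) := by
      gcongr
    linarith
  have hsurp : ∀ t, t < b → ∃ n, t < d n := by
    intro t ht
    obtain ⟨n, hn⟩ := exists_nat_gt ((b - c) / (b - t))
    refine ⟨n, ?_⟩
    have hbt : 0 < b - t := sub_pos.mpr ht
    have h1 : (b - c) / (b - t) < n + 1 := by linarith [hn]
    have h2 : (b - c) / (n + 1) < b - t := by
      rw [div_lt_iff₀ (by positivity)]
      rw [div_lt_iff₀ hbt] at h1
      linarith
    simp only [hd]
    linarith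
  have hsubI : ∀ n, Icc c (d n) ⊆ Ico c b := fun n t ht => ⟨ht.1, lt_of_le_of_lt ht.2 (hdb n)⟩
  have H : ∀ n, ∃ W : ℝ → ℂ, ContinuousOn W (Icc c (d n)) ∧ W c = w₀ ∧
      ∀ t ∈ Icc c (d n), W t ^ p = φ t :=
    fun n => lift_Icc hp hφc (hcd n) (fun t ht => hφ t (hsubI n ht)) hw₀
  choose Wn hWn1 hWn2 hWn3 using H
  have agree : ∀ n m, n ≤ m → ∀ t ∈ Icc c (d n), Wn n t = Wn m t := by
    intro n m hnm t ht
    have hsub : Icc c (d n) ⊆ Icc c (d m) := Icc_subset_Icc le_rfl (hmono n m hnm)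
    exact lift_unique hp (hcd n) (hWn1 n) ((hWn1 m).mono hsub)
      (hWn3 n) (fun s hs => hWn3 m s (hsub hs)) (fun s hs => hφ s (hsubI n hs))
      (by rw [hWn2 n, hWn2 m]) t ht
  set W : ℝ → ℂ := fun t => if h : ∃ n, t ≤ d n then Wn (Classical.choose h) t else 0 with hW
  have key : ∀ n, ∀ t ∈ Icc c (d n), W t = Wn n t := by
    intro n t ht
    have hex : ∃ m, t ≤ d m := ⟨n, ht.2⟩
    rw [hW]
    simp only [dif_pos hex]
    have hm : t ≤ d (Classical.choose hex) := Classical.choose_spec hex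
    rcases le_total n (Classical.choose hex) with h | h
    · exact (agree n _ h t ht).symm
    · exact agree _ n h t ⟨ht.1, hm⟩
  refine ⟨W, ?_, ?_, ?_⟩
  · intro t₀ ht₀
    obtain ⟨n, hn⟩ := hsurp t₀ ht₀.2
    have h1 : ContinuousWithinAt (Wn n) (Icc c (d n)) t₀ := hWn1 n t₀ ⟨ht₀.1, hn.le⟩
    have h2 : ContinuousWithinAt W (Icc c (d n)) t₀ :=
      h1.congr (fun s hs => key n s hs) (key n t₀ ⟨ht₀.1, hn.le⟩)
    refine h2.mono_of_mem_nhdsWithin ?_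
    rw [mem_nhdsWithin]
    exact ⟨Iio (d n), isOpen_Iio, hn, fun s hs => ⟨hs.2.1, hs.1.le⟩⟩
  · rw [key 0 c ⟨le_rfl, by rw [hd0]⟩, hWn2 0]
  · intro t ht
    obtain ⟨n, hn⟩ := hsurp t ht.2
    rw [key n t ⟨ht.1, hn.le⟩]
    exact hWn3 n t ⟨ht.1, hn.le⟩

private lemma lift_Ioc {p : ℕ} (hp : p ≠ 0) {φ : ℝ → ℂ} (hφc : Continuous φ)
    {a c : ℝ} (hac : a < c) (hφ : ∀ t ∈ Ioc a c, φ t ≠ 0)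
    {w₀ : ℂ} (hw₀ : w₀ ^ p = φ c) :
    ∃ W : ℝ → ℂ, ContinuousOn W (Ioc a c) ∧ W c = w₀ ∧ ∀ t ∈ Ioc a c, W t ^ p = φ t := by
  set ψ : ℝ → ℂ := fun t => φ (2 * c - t) with hψ
  have hmaps : ∀ t ∈ Ico c (2 * c - a), 2 * c - t ∈ Ioc a c := by
    intro t ht
    constructor <;> [skip; skip] <;> simp only [mem_Ico] at ht <;> linarith [ht.1, ht.2]
  obtain ⟨V, hV1, hV2, hV3⟩ := lift_Ico hp (hφc.comp (by continuity))
    (by linarith : c < 2 * c - a) (fun t ht => hφ _ (hmaps t ht))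
    (w₀ := w₀) (by show w₀ ^ p = φ (2 * c - c); rw [show 2 * c - c = c by ring]; exact hw₀)
  refine ⟨fun t => V (2 * c - t), ?_, ?_, ?_⟩
  · refine hV1.comp (Continuous.continuousOn (by continuity)) ?_
    intro t ht
    simp only [mem_Ico]
    constructor <;> simp only [mem_Ioc] at ht <;> linarith [ht.1, ht.2]
  · show V (2 * c - c) = w₀; rw [show 2 * c - c = c by ring]; exact hV2
  · intro t ht
    have h2 : 2 * c - t ∈ Ico c (2 * c - a) := by
      simp only [mem_Ico]
      constructor <;> simp only [mem_Ioc] at ht <;> linarith [ht.1, ht.2]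
    have h3 := hV3 _ h2
    simp only [Function.comp] at h3
    rwa [show 2 * c - (2 * c - t) = t by ring] at h3

private lemma lift_curve {p : ℕ} (hp : p ≠ 0) {φ : ℝ → ℂ} (hφc : Continuous φ)
    {z₂ : ℂ} (hne : ∀ t ∈ Ioo (0:ℝ) 1, φ t ≠ 0)
    (hz₂ : z₂ ^ p = φ 0) (hend : φ 1 = 0) :
    ∃ W : ℝ → ℂ, ContinuousOn W (Ioo 0 1) ∧ (∀ t ∈ Ioo (0:ℝ) 1, W t ^ p = φ t) ∧
      Tendsto W (𝓝[Ioo (0:ℝ) 1] 0) (𝓝 z₂) ∧ Tendsto W (𝓝[Ioo (0:ℝ) 1] 1) (𝓝 0) := by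
  have hIooIco : Ioo (0:ℝ) 1 ⊆ Ico 0 1 := Ioo_subset_Ico_self
  have hφ1 : Tendsto φ (𝓝[Ioo (0:ℝ) 1] 1) (𝓝 0) := by
    have := (hφc.tendsto 1).mono_left (nhdsWithin_le_nhds (s := Ioo (0:ℝ) 1))
    rwa [hend] at this
  by_cases h0 : φ 0 = 0
  · -- z₂ = 0; anchor-free lift glued at 1/2
    have hz₂0 : z₂ = 0 := by
      have : z₂ ^ p = 0 := by rw [hz₂, h0]
      exact pow_eq_zero_iff hp |>.mp this
    have hhalf : φ (1/2 : ℝ) ≠ 0 := hne _ (by norm_num)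
    set w₀ : ℂ := Complex.exp (Complex.log (φ (1/2)) / p) with hw₀def
    have hw₀ : w₀ ^ p = φ (1/2 : ℝ) := pow_root_eq hp hhalf
    obtain ⟨W₁, hW₁1, hW₁2, hW₁3⟩ := lift_Ioc hp hφc (by norm_num : (0:ℝ) < 1/2)
      (fun t ht => hne t ⟨ht.1, lt_of_le_of_lt ht.2 (by norm_num)⟩) hw₀
    obtain ⟨W₂, hW₂1, hW₂2, hW₂3⟩ := lift_Ico hp hφc (by norm_num : (1:ℝ)/2 < 1)
      (fun t ht => hne t ⟨lt_of_lt_of_le (by norm_num) ht.1, ht.2⟩) hw₀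
    set W : ℝ → ℂ := fun t => if t ≤ 1/2 then W₁ t else W₂ t with hW
    have hWpow : ∀ t ∈ Ioo (0:ℝ) 1, W t ^ p = φ t := by
      intro t ht
      by_cases h : t ≤ 1/2
      · simp only [hW, if_pos h]
        exact hW₁3 t ⟨ht.1, h⟩
      · simp only [hW, if_neg h]
        push_neg at h
        exact hW₂3 t ⟨h.le, ht.2⟩
    have hWc : ContinuousOn W (Ioo 0 1) := by
      refine glueIf (hW₁1.mono ?_) (hW₂1.mono ?_) (by rw [hW₁2, hW₂2])
      · exact fun t ht => ⟨ht.1.1, ht.2⟩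
      · exact fun t ht => ⟨ht.2, ht.1.2⟩
    refine ⟨W, hWc, hWpow, ?_, ?_⟩
    · rw [hz₂0]
      have hφ0 : Tendsto φ (𝓝[Ioo (0:ℝ) 1] 0) (𝓝 0) := by
        have := (hφc.tendsto 0).mono_left (nhdsWithin_le_nhds (s := Ioo (0:ℝ) 1))
        rwa [h0] at this
      refine tendsto_zero_of_pow hp ?_ hφ0
      filter_upwards [self_mem_nhdsWithin] with t ht using hWpow t ht
    · refine tendsto_zero_of_pow hp ?_ hφ1
      filter_upwards [self_mem_nhdsWithin] with t ht using hWpow t ht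
  · -- anchored lift on [0,1)
    obtain ⟨W, hW1, hW2, hW3⟩ := lift_Ico hp hφc (by norm_num : (0:ℝ) < 1)
      (fun t ht => by
        rcases eq_or_lt_of_le ht.1 with h | h
        · rwa [← h]
        · exact hne t ⟨h, ht.2⟩) hz₂
    refine ⟨W, hW1.mono hIooIco, fun t ht => hW3 t (hIooIco ht), ?_, ?_⟩
    · have h1 : ContinuousWithinAt W (Ico 0 1) 0 := hW1 0 (by norm_num)
      have h2 : Tendsto W (𝓝[Ico (0:ℝ) 1] 0) (𝓝 (W 0)) := h1
      rw [hW2] at h2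
      exact h2.mono_left (nhdsWithin_mono _ hIooIco)
    · refine tendsto_zero_of_pow hp ?_ hφ1
      filter_upwards [self_mem_nhdsWithin] with t ht using hW3 t (hIooIco ht)

private lemma zeros_countable {f : ℂ → ℂ} (hf : Differentiable ℂ f)
    (hs : ∀ z, f z = 0 → deriv f z ≠ 0) : (f ⁻¹' {0}).Countable := by
  set Z : Set ℂ := f ⁻¹' {0} with hZ
  have hZc : IsClosed Z := isClosed_singleton.preimage hf.continuous
  have hdisc : DiscreteTopology Z := by
    rw [discreteTopology_subtype_iff]
    intro x hx
    have hx0 : f x = 0 := hx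
    rcases (hf.analyticAt x).eventually_eq_zero_or_eventually_ne_zero with h | h
    · exfalso
      apply hs x hx0
      have : deriv f x = deriv (fun _ => (0:ℂ)) x := Filter.EventuallyEq.deriv_eq h
      rw [this, deriv_const]
    · rw [← Filter.empty_mem_iff_bot]
      have : Zᶜ ∈ 𝓝[≠] x := by
        filter_upwards [h] with z hz
        simp only [hZ, mem_compl_iff, mem_preimage, mem_singleton_iff]
        exact hz
      rw [Filter.mem_inf_principal]
      filter_upwards [this] with z hz hzZ
      exact absurd hzZ hz
  have hcover : Z ⊆ ⋃ n : ℕ, Z ∩ Metric.closedBall 0 n := by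
    intro z hz
    obtain ⟨n, hn⟩ := exists_nat_ge ‖z‖
    exact mem_iUnion.mpr ⟨n, hz, by simpa [Complex.dist_eq] using hn⟩
  refine Set.Countable.mono hcover ?_
  refine Set.countable_iUnion fun n => ?_
  have hcpt : IsCompact (Z ∩ Metric.closedBall 0 n) :=
    (isCompact_closedBall 0 n).inter_left hZc
  have : DiscreteTopology ↥(Z ∩ Metric.closedBall 0 n) :=
    DiscreteTopology.of_subset hdisc inter_subset_left
  exact (hcpt.finite ⟨this⟩).countable

/-- connectedness part of Theorem 4.3.
Let `p, q ≥ 2`. Let `f : ℂ → ℂ` be entire with infinite zero set, all zeros simple, and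
`g : ℂ → ℂ` entire with all zeros simple, such that `A = g⁻¹(0)` is a nonempty subset of
`f⁻¹(0)` which is either infinite or finite of even cardinality.  Then the fiber product
`S(f,g) = {(z₁,z₂,z₃) : z₂^p = f z₁ ∧ z₃^q = g z₁}` is a connected subset of `ℂ³`. -/
theorem fiber_product_connected
    (p q : ℕ) (hp : 2 ≤ p) (hq : 2 ≤ q)
    (f g : ℂ → ℂ) (hf : Differentiable ℂ f) (hg : Differentiable ℂ g)
    (hfzero : (f ⁻¹' {0}).Infinite)
    (hfsimple : ∀ z, f z = 0 → deriv f z ≠ 0)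
    (hgsimple : ∀ z, g z = 0 → deriv g z ≠ 0)
    (hA : (g ⁻¹' {0}).Nonempty)
    (hAf : g ⁻¹' {0} ⊆ f ⁻¹' {0})
    (hAcard : (g ⁻¹' {0}).Infinite ∨
      ((g ⁻¹' {0}).Finite ∧ Even (g ⁻¹' {0}).ncard)) :
    IsConnected {z : ℂ × ℂ × ℂ | z.2.1 ^ p = f z.1 ∧ z.2.2 ^ q = g z.1} := by
  have hp0 : p ≠ 0 := by omega
  have hq0 : q ≠ 0 := by omega
  obtain ⟨a, haA⟩ := hA
  have hga : g a = 0 := haA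
  have hfa : f a = 0 := hAf haA
  have hPS : ((a, 0, 0) : ℂ × ℂ × ℂ) ∈
      {z : ℂ × ℂ × ℂ | z.2.1 ^ p = f z.1 ∧ z.2.2 ^ q = g z.1} := by
    refine ⟨?_, ?_⟩ <;> simp [hfa, hga, zero_pow hp0, zero_pow hq0]
  refine ⟨⟨_, hPS⟩, isPreconnected_of_forall (a, 0, 0) ?_⟩
  rintro ⟨z₁, z₂, z₃⟩ ⟨hy1, hy2⟩
  simp only at hy1 hy2
  by_cases hz₁a : z₁ = a
  · subst hz₁a
    have hz₂0 : z₂ = 0 := pow_eq_zero_iff hp0 |>.mp (by rw [hy1, hfa])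
    have hz₃0 : z₃ = 0 := pow_eq_zero_iff hq0 |>.mp (by rw [hy2, hga])
    subst hz₂0; subst hz₃0
    exact ⟨{(z₁, 0, 0)}, singleton_subset_iff.mpr hPS, rfl, rfl, isPreconnected_singleton⟩
  -- nontrivial case
  have hZc : (f ⁻¹' {0}).Countable := zeros_countable hf hfsimple
  set Z' : Set ℂ := f ⁻¹' {0} \ {z₁, a} with hZ'
  have hZ'c : Z'.Countable := hZc.mono diff_subset
  have hrank : 1 < Module.rank ℝ ℂ := by
    rw [Complex.rank_real_complex]; norm_num
  have hpc : IsPathConnected Z'ᶜ := hZ'c.isPathConnected_compl_of_one_lt_rank hrank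
  have hz₁m : z₁ ∈ Z'ᶜ := fun h => h.2 (Or.inl rfl)
  have ham : a ∈ Z'ᶜ := fun h => h.2 (Or.inr rfl)
  obtain ⟨γ, hγ⟩ := hpc.joinedIn z₁ hz₁m a ham
  -- trimming
  set A0 : Set ℝ := Icc (0:ℝ) 1 ∩ γ.extend ⁻¹' {z₁} with hA0
  have hA0cl : IsClosed A0 :=
    isClosed_Icc.inter (isClosed_singleton.preimage γ.continuous_extend)
  have hA0ne : A0.Nonempty := ⟨0, ⟨le_rfl, zero_le_one⟩, by simp [Path.extend_zero]⟩
  have hA0bdd : BddAbove A0 := BddAbove.mono (fun t ht => ht.1) bddAbove_Icc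
  set t₀ : ℝ := sSup A0 with ht₀def
  have ht₀A : t₀ ∈ A0 := hA0cl.csSup_mem hA0ne hA0bdd
  set B0 : Set ℝ := Icc t₀ 1 ∩ γ.extend ⁻¹' {a} with hB0
  have hB0cl : IsClosed B0 :=
    isClosed_Icc.inter (isClosed_singleton.preimage γ.continuous_extend)
  have hB0ne : B0.Nonempty := ⟨1, ⟨ht₀A.1.2, le_rfl⟩, by simp [Path.extend_one]⟩
  have hB0bdd : BddBelow B0 := BddBelow.mono (fun t ht => ht.1) bddBelow_Icc
  set t₁ : ℝ := sInf B0 with ht₁def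
  have ht₁B : t₁ ∈ B0 := hB0cl.csInf_mem hB0ne hB0bdd
  have hext₀ : γ.extend t₀ = z₁ := ht₀A.2
  have hext₁ : γ.extend t₁ = a := ht₁B.2
  have ht₀₁ : t₀ < t₁ := by
    rcases lt_or_eq_of_le ht₁B.1.1 with h | h
    · exact h
    · exact absurd (by rw [← h, hext₀] at hext₁; exact hext₁) hz₁a
  set η : ℝ → ℂ := fun u => γ.extend (t₀ + u * (t₁ - t₀)) with hη
  have hηc : Continuous η := γ.continuous_extend.comp (by continuity)
  have hη0 : η 0 = z₁ := by simp [hη, hext₀]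
  have hη1 : η 1 = a := by
    simp only [hη, one_mul]
    rw [show t₀ + (t₁ - t₀) = t₁ by ring, hext₁]
  have hkey : ∀ u ∈ Ioo (0:ℝ) 1, f (η u) ≠ 0 ∧ g (η u) ≠ 0 := by
    intro u hu
    set t : ℝ := t₀ + u * (t₁ - t₀) with htdef
    have htlo : t₀ < t := by nlinarith [hu.1, hu.2, ht₀₁]
    have hthi : t < t₁ := by nlinarith [hu.1, hu.2, ht₀₁]
    have htI : t ∈ Icc (0:ℝ) 1 :=
      ⟨le_trans ht₀A.1.1 htlo.le, le_trans hthi.le ht₁B.1.2⟩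
    have hne1 : γ.extend t ≠ z₁ := by
      intro h
      exact absurd (le_csSup hA0bdd ⟨htI, h⟩) (not_le.mpr htlo)
    have hne2 : γ.extend t ≠ a := by
      intro h
      exact absurd (csInf_le hB0bdd ⟨⟨htlo.le, htI.2⟩, h⟩) (not_le.mpr hthi)
    have hmem : γ.extend t ∈ Z'ᶜ := by
      rw [γ.extend_apply htI]
      exact hγ _
    have hfne : f (γ.extend t) ≠ 0 := by
      intro h
      exact hmem ⟨h, by simp [hne1, hne2]⟩
    refine ⟨hfne, fun h => hfne (hAf (by exact h))⟩
  obtain ⟨W, hWc, hWp, hW0, hW1⟩ := lift_curve hp0 (hf.continuous.comp hηc)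
    (z₂ := z₂) (fun u hu => (hkey u hu).1) (by rw [Function.comp_apply, hη0]; exact hy1)
    (by rw [Function.comp_apply, hη1]; exact hfa)
  obtain ⟨V, hVc, hVp, hV0, hV1⟩ := lift_curve hq0 (hg.continuous.comp hηc)
    (z₂ := z₃) (fun u hu => (hkey u hu).2) (by rw [Function.comp_apply, hη0]; exact hy2)
    (by rw [Function.comp_apply, hη1]; exact hga)
  set X : ℝ → ℂ × ℂ × ℂ := fun u => (η u, W u, V u) with hX
  set M : Set (ℂ × ℂ × ℂ) := X '' Ioo 0 1 with hM
  have hMpre : IsPreconnected M :=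
    isPreconnected_Ioo.image X ((hηc.continuousOn).prodMk (hWc.prodMk hVc))
  have hne0 : (𝓝[Ioo (0:ℝ) 1] (0:ℝ)).NeBot := by
    rw [← mem_closure_iff_nhdsWithin_neBot, closure_Ioo (by norm_num : (0:ℝ) ≠ 1)]
    exact ⟨le_rfl, zero_le_one⟩
  have hne1' : (𝓝[Ioo (0:ℝ) 1] (1:ℝ)).NeBot := by
    rw [← mem_closure_iff_nhdsWithin_neBot, closure_Ioo (by norm_num : (0:ℝ) ≠ 1)]
    exact ⟨zero_le_one, le_rfl⟩
  have hMev : ∀ᶠ u in 𝓝[Ioo (0:ℝ) 1] (0:ℝ), X u ∈ M := by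
    filter_upwards [self_mem_nhdsWithin] with u hu using mem_image_of_mem X hu
  have hMev1 : ∀ᶠ u in 𝓝[Ioo (0:ℝ) 1] (1:ℝ), X u ∈ M := by
    filter_upwards [self_mem_nhdsWithin] with u hu using mem_image_of_mem X hu
  have hyclos : (z₁, z₂, z₃) ∈ closure M := by
    refine mem_closure_of_tendsto ?_ hMev
    have hηt : Tendsto η (𝓝[Ioo (0:ℝ) 1] 0) (𝓝 z₁) := by
      have := (hηc.tendsto 0).mono_left (nhdsWithin_le_nhds (s := Ioo (0:ℝ) 1))
      rwa [hη0] at this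
    exact hηt.prodMk_nhds (hW0.prodMk_nhds hV0)
  have hPclos : ((a, 0, 0) : ℂ × ℂ × ℂ) ∈ closure M := by
    refine mem_closure_of_tendsto ?_ hMev1
    have hηt : Tendsto η (𝓝[Ioo (0:ℝ) 1] 1) (𝓝 a) := by
      have := (hηc.tendsto 1).mono_left (nhdsWithin_le_nhds (s := Ioo (0:ℝ) 1))
      rwa [hη1] at this
    exact hηt.prodMk_nhds (hW1.prodMk_nhds hV1)
  refine ⟨insert (z₁, z₂, z₃) (insert ((a,0,0) : ℂ × ℂ × ℂ) M), ?_, ?_, ?_, ?_⟩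
  · rintro x (rfl | rfl | ⟨u, hu, rfl⟩)
    · exact ⟨hy1, hy2⟩
    · exact hPS
    · exact ⟨hWp u hu, hVp u hu⟩
  · exact mem_insert_iff.mpr (Or.inr (mem_insert _ _))
  · exact mem_insert _ _
  · refine hMpre.subset_closure (fun x hx => mem_insert_iff.mpr
      (Or.inr (mem_insert_iff.mpr (Or.inr hx)))) ?_
    rintro x (rfl | rfl | hx)
    · exact hyclos
    · exact hPclos
    · exact subset_closure hx

end
end

section
/- Let p = q = 2. Let f : ℂ → ℂ be an entire function whose zero set f⁻¹(0) is infinite and all of whose zeros are simple, and let g : ℂ → ℂ be an entire function all of whose zeros are simple such that A := g⁻¹(0) is a nonempty subset of f⁻¹(0). Define α₂ : S(f,g) → S(f,g) by α₂(z₁,z₂,z₃) = (z₁,−z₂,z₃); this is a well-defined self-homeomorphism of S(f,g) with α₂ ∘ α₂ = id. Moreover, the projection π₂ : S(f,g) → S₂(g), π₂(z₁,z₂,z₃) = (z₁,z₃), is continuous and surjective, its fibers are exactly the α₂-orbits (π₂(u) = π₂(v) if and only if v = u or v = α₂(u)), and the induced map from the quotient topological space S(f,g)/⟨α₂⟩ (the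 quotient of S(f,g) by the equivalence relation u ∼ α₂(u)) to S₂(g) is a homeomorphism. -/
/-- The fiber product `S(f,g)` of two hyperelliptic curves (`p = q = 2`). -/
abbrev HypFiberProd (f g : ℂ → ℂ) : Type :=
  {z : ℂ × ℂ × ℂ // z.2.1 ^ 2 = f z.1 ∧ z.2.2 ^ 2 = g z.1}

/-- The hyperelliptic curve `S₂(F) = {(z₁,z₂) : z₂² = F z₁}`. -/
abbrev HypCurve (F : ℂ → ℂ) : Type := {w : ℂ × ℂ // w.2 ^ 2 = F w.1}

/-- The relation `u ∼ α₂ u` on `S(f,g)`, where `α₂(z₁,z₂,z₃) = (z₁,-z₂,z₃)`. -/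
def negSecondRel (f g : ℂ → ℂ) (u v : HypFiberProd f g) : Prop :=
  (v : ℂ × ℂ × ℂ) = ((u : ℂ × ℂ × ℂ).1, -(u : ℂ × ℂ × ℂ).2.1, (u : ℂ × ℂ × ℂ).2.2)

section Aux

variable (f g : ℂ → ℂ)

def alphaTwo : HypFiberProd f g ≃ₜ HypFiberProd f g where
  toFun u := ⟨(u.val.1, -u.val.2.1, u.val.2.2), by
    obtain ⟨h1, h2⟩ := u.prop; exact ⟨by simpa using h1, h2⟩⟩
  invFun u := ⟨(u.val.1, -u.val.2.1, u.val.2.2), by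
    obtain ⟨h1, h2⟩ := u.prop; exact ⟨by simpa using h1, h2⟩⟩
  left_inv u := by ext <;> simp
  right_inv u := by ext <;> simp
  continuous_toFun := by fun_prop
  continuous_invFun := by fun_prop

def piTwo (u : HypFiberProd f g) : HypCurve g := ⟨(u.val.1, u.val.2.2), u.prop.2⟩

theorem piTwo_continuous : Continuous (piTwo f g) := by
  unfold piTwo; fun_prop

theorem piTwo_surjective (hfg : ∀ w : ℂ, ∃ z : ℂ, z ^ 2 = f w) :
    Function.Surjective (piTwo f g) := by
  rintro ⟨⟨z1, z3⟩, hw⟩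
  obtain ⟨z2, hz2⟩ := hfg z1
  exact ⟨⟨(z1, z2, z3), hz2, hw⟩, rfl⟩

theorem piTwo_fibers (u v : HypFiberProd f g) :
    piTwo f g u = piTwo f g v ↔ v = u ∨ v = alphaTwo f g u := by
  obtain ⟨⟨a1, a2, a3⟩, ha⟩ := u
  obtain ⟨⟨b1, b2, b3⟩, hb⟩ := v
  simp only [piTwo, alphaTwo, Subtype.mk_eq_mk, Prod.mk.injEq, Homeomorph.homeomorph_mk_coe,
    Equiv.coe_fn_mk]
  constructor
  · rintro ⟨rfl, rfl⟩
    have h2 : b2 ^ 2 = a2 ^ 2 := by rw [ha.1, hb.1]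
    have : (b2 - a2) * (b2 + a2) = 0 := by ring_nf; linear_combination h2
    rcases mul_eq_zero.mp this with h | h
    · exact Or.inl ⟨rfl, sub_eq_zero.mp h, rfl⟩
    · exact Or.inr ⟨rfl, by linear_combination h, rfl⟩
  · rintro (⟨rfl, rfl, rfl⟩ | ⟨rfl, rfl, rfl⟩) <;> exact ⟨rfl, rfl⟩

theorem piTwo_isCompact_preimage (hfc : Continuous f) (hgc : Continuous g)
    {K : Set (HypCurve g)} (hK : IsCompact K) : IsCompact (piTwo f g ⁻¹' K) := by
  set K' : Set (ℂ × ℂ) := Subtype.val '' K with hK'def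
  have hK' : IsCompact K' := hK.image continuous_subtype_val
  have hK1 : IsCompact (Prod.fst '' K') := hK'.image continuous_fst
  have hK2 : IsCompact (Prod.snd '' K') := hK'.image continuous_snd
  obtain ⟨M, hM⟩ := (hK1.image hfc.norm).bddAbove
  set S : Set (ℂ × ℂ × ℂ) :=
    {z | (z.2.1 ^ 2 = f z.1 ∧ z.2.2 ^ 2 = g z.1) ∧ (z.1, z.2.2) ∈ K'} with hSdef
  have hSclosed : IsClosed S := by
    apply IsClosed.inter
    · exact (isClosed_eq (by fun_prop) (by fun_prop)).inter
        (isClosed_eq (by fun_prop) (by fun_prop))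
    · exact hK'.isClosed.preimage (by fun_prop)
  have hSsub : S ⊆ (Prod.fst '' K') ×ˢ
      (Metric.closedBall (0 : ℂ) (Real.sqrt M) ×ˢ (Prod.snd '' K')) := by
    rintro ⟨z1, z2, z3⟩ ⟨⟨h1, h2⟩, hmem⟩
    refine ⟨⟨(z1, z3), hmem, rfl⟩, ?_, ⟨(z1, z3), hmem, rfl⟩⟩
    rw [Metric.mem_closedBall, dist_zero_right]
    have hn : ‖z2‖ ^ 2 = ‖f z1‖ := by rw [← h1]; simp [norm_pow]
    calc ‖z2‖ = Real.sqrt (‖z2‖ ^ 2) := (Real.sqrt_sq (norm_nonneg _)).symm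
      _ ≤ Real.sqrt M := Real.sqrt_le_sqrt (hn ▸ hM ⟨z1, ⟨(z1, z3), hmem, rfl⟩, rfl⟩)
  have hScompact : IsCompact S :=
    (hK1.prod ((isCompact_closedBall _ _).prod hK2)).of_isClosed_subset hSclosed hSsub
  rw [Topology.IsEmbedding.subtypeVal.isCompact_iff]
  have himg : Subtype.val '' (piTwo f g ⁻¹' K) = S := by
    ext z
    constructor
    · rintro ⟨u, hu, rfl⟩
      exact ⟨u.prop, ⟨piTwo f g u, hu, rfl⟩⟩
    · rintro ⟨⟨h1, h2⟩, w, hwK, hwv⟩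
      refine ⟨⟨z, h1, h2⟩, ?_, rfl⟩
      have hpw : piTwo f g ⟨z, h1, h2⟩ = w := Subtype.ext hwv.symm
      show piTwo f g ⟨z, h1, h2⟩ ∈ K; rw [hpw]; exact hwK
  rw [himg]; exact hScompact

theorem piTwo_isProperMap (hfc : Continuous f) (hgc : Continuous g) :
    IsProperMap (piTwo f g) := by
  rw [isProperMap_iff_isCompact_preimage]
  exact ⟨piTwo_continuous f g, fun K hK => piTwo_isCompact_preimage f g hfc hgc hK⟩

end Aux

theorem quotient_by_alpha2_homeomorphic'
    (f g : ℂ → ℂ) (hf : Differentiable ℂ f) (hg : Differentiable ℂ g) :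
    ∃ (α₂ : HypFiberProd f g ≃ₜ HypFiberProd f g) (π₂ : HypFiberProd f g → HypCurve g),
      (∀ u : HypFiberProd f g, (α₂ u : ℂ × ℂ × ℂ) =
        ((u : ℂ × ℂ × ℂ).1, -(u : ℂ × ℂ × ℂ).2.1, (u : ℂ × ℂ × ℂ).2.2)) ∧
      α₂.trans α₂ = Homeomorph.refl _ ∧
      (∀ u : HypFiberProd f g,
        (π₂ u : ℂ × ℂ) = ((u : ℂ × ℂ × ℂ).1, (u : ℂ × ℂ × ℂ).2.2)) ∧
      Continuous π₂ ∧ Function.Surjective π₂ ∧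
      (∀ u v : HypFiberProd f g, π₂ u = π₂ v ↔ v = u ∨ v = α₂ u) ∧
      ∃ h : Quot (negSecondRel f g) ≃ₜ HypCurve g,
        ∀ u : HypFiberProd f g, h (Quot.mk _ u) = π₂ u := by
  have hsurj : Function.Surjective (piTwo f g) :=
    piTwo_surjective f g fun w => IsAlgClosed.exists_pow_nat_eq (f w) zero_lt_two
  have hfib : ∀ u v, piTwo f g u = piTwo f g v ↔ v = u ∨ v = alphaTwo f g u :=
    piTwo_fibers f g
  have hrel : ∀ u v, negSecondRel f g u v → piTwo f g u = piTwo f g v := by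
    intro u v h
    refine Subtype.ext ?_
    show ((u : ℂ × ℂ × ℂ).1, (u : ℂ × ℂ × ℂ).2.2) = ((v : ℂ × ℂ × ℂ).1, (v : ℂ × ℂ × ℂ).2.2)
    rw [h]
  set pibar : Quot (negSecondRel f g) → HypCurve g := Quot.lift (piTwo f g) hrel with hpibar
  have hcont : Continuous pibar := continuous_quot_lift hrel (piTwo_continuous f g)
  have hbij : Function.Bijective pibar := by
    constructor
    · intro x y
      induction x using Quot.ind with | _ u =>
      induction y using Quot.ind with | _ v =>
      intro hxy
      rcases (hfib u v).mp hxy with h | h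
      · rw [h]
      · exact Quot.sound (congrArg Subtype.val h)
    · intro w
      obtain ⟨u, hu⟩ := hsurj w
      exact ⟨Quot.mk _ u, hu⟩
  have hproper : IsProperMap (piTwo f g) :=
    piTwo_isProperMap f g hf.continuous hg.continuous
  have hclosed : IsClosedMap pibar := by
    intro C hC
    have hmks : Function.Surjective (Quot.mk (negSecondRel f g)) :=
      Quot.mk_surjective
    have h1 : pibar '' C = piTwo f g '' (Quot.mk _ ⁻¹' C) := by
      conv_lhs => rw [← Set.image_preimage_eq C hmks]
      rw [← Set.image_comp]
      rfl
    rw [h1]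
    exact hproper.isClosedMap _ (hC.preimage continuous_quot_mk)
  have hopen : IsOpenMap pibar := by
    intro U hU
    rw [← compl_compl (pibar '' U), ← Set.image_compl_eq hbij]
    exact (hclosed _ hU.isClosed_compl).isOpen_compl
  refine ⟨alphaTwo f g, piTwo f g, fun u => rfl, ?_, fun u => rfl, piTwo_continuous f g,
    hsurj, hfib, Equiv.toHomeomorphOfContinuousOpen (Equiv.ofBijective pibar hbij) hcont hopen,
    fun u => rfl⟩
  refine Homeomorph.ext fun u => Subtype.ext ?_
  show ((u : ℂ × ℂ × ℂ).1, - -(u : ℂ × ℂ × ℂ).2.1, (u : ℂ × ℂ × ℂ).2.2) = (u : ℂ × ℂ × ℂ)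
  rw [neg_neg]


/-- topological content of Lemma 4.6, second quotient.
`α₂(z₁,z₂,z₃) = (z₁,-z₂,z₃)` is a well-defined self-homeomorphism of `S(f,g)` of order two,
the projection `π₂(z₁,z₂,z₃) = (z₁,z₃)` onto `S₂(g)` is continuous and surjective with fibers
exactly the `α₂`-orbits, and the induced map `S(f,g)/⟨α₂⟩ → S₂(g)` is a homeomorphism. -/
theorem quotient_by_alpha2_homeomorphic
    (f g : ℂ → ℂ) (hf : Differentiable ℂ f) (hg : Differentiable ℂ g)
    (hfzero : (f ⁻¹' {0}).Infinite)
    (hfsimple : ∀ z, f z = 0 → deriv f z ≠ 0)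
    (hgsimple : ∀ z, g z = 0 → deriv g z ≠ 0)
    (hA : (g ⁻¹' {0}).Nonempty) (hAf : g ⁻¹' {0} ⊆ f ⁻¹' {0}) :
    ∃ (α₂ : HypFiberProd f g ≃ₜ HypFiberProd f g) (π₂ : HypFiberProd f g → HypCurve g),
      (∀ u : HypFiberProd f g, (α₂ u : ℂ × ℂ × ℂ) =
        ((u : ℂ × ℂ × ℂ).1, -(u : ℂ × ℂ × ℂ).2.1, (u : ℂ × ℂ × ℂ).2.2)) ∧
      α₂.trans α₂ = Homeomorph.refl _ ∧
      (∀ u : HypFiberProd f g,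
        (π₂ u : ℂ × ℂ) = ((u : ℂ × ℂ × ℂ).1, (u : ℂ × ℂ × ℂ).2.2)) ∧
      Continuous π₂ ∧ Function.Surjective π₂ ∧
      (∀ u v : HypFiberProd f g, π₂ u = π₂ v ↔ v = u ∨ v = α₂ u) ∧
      ∃ h : Quot (negSecondRel f g) ≃ₜ HypCurve g,
        ∀ u : HypFiberProd f g, h (Quot.mk _ u) = π₂ u := by
  exact quotient_by_alpha2_homeomorphic' f g hf hg
end

section
/- Let f : ℂ → ℂ be an entire function whose zero set f⁻¹(0) is infinite and all of whose zeros are simple, and let g, h : ℂ → ℂ be entire functions all of whose zeros are simple, such that A := g⁻¹(0) and B := h⁻¹(0) are nonempty subsets of f⁻¹(0), each of which is either infinite or finite of even cardinality. Let S(f,g) = {(z₁,z₂,z₃) ∈ ℂ³ : z₂² = f(z₁), z₃² = g(z₁)} and S(f,h) = {(z₁,z₂,z₃) ∈ ℂ³ : z₂² = f(z₁), z₃² = h(z₁)}, with their subspace topologies. Suppose there exists a bijective holomorphic map t : ℂ → ℂ such that t(f⁻¹(0)) = f⁻¹(0) and t(A) = B. Then there exists a homeomorphism T : S(f,g) → S(f,h)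 which carries the singular locus onto the singular locus, i.e. T({(z₁,z₂,z₃) ∈ S(f,g) : z₁ ∈ A}) = {(z₁,z₂,z₃) ∈ S(f,h) : z₁ ∈ B}. -/
section HypAux

open Filter Topology Set Function Complex

/-- Every entire function has an entire primitive. -/
lemma exists_primitive (f : ℂ → ℂ) (hf : Differentiable ℂ f) :
    ∃ F : ℂ → ℂ, ∀ z, HasDerivAt F (f z) z := by
  set a : ℕ → ℂ := fun n => ((n).factorial : ℂ)⁻¹ * iteratedDeriv n f 0 with ha
  have htaylor : ∀ z : ℂ, HasSum (fun n : ℕ => a n * z ^ n) (f z) := by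
    intro z
    have := hasSum_taylorSeries_of_entire hf 0 z
    convert this using 2 with n
    · rfl
    simp [ha, smul_eq_mul]
    ring
  refine ⟨fun y => ∑' n : ℕ, a n / (n + 1) * y ^ (n + 1), fun z => ?_⟩
  set R : ℝ := ‖z‖ + 1 with hR
  have hR0 : 0 < R := by positivity
  -- summable bound on the ball of radius R
  have hsum : Summable fun n : ℕ => ‖a n‖ * R ^ n := by
    have h1 : Summable fun n : ℕ => a n * (R : ℂ) ^ n := (htaylor (R : ℂ)).summable
    have h2 : Summable fun n : ℕ => ‖a n * (R : ℂ) ^ n‖ := by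
      rwa [summable_norm_iff]
    refine h2.congr fun n => ?_
    rw [norm_mul, norm_pow, Complex.norm_real, Real.norm_of_nonneg hR0.le]
  have key := hasDerivAt_tsum_of_isPreconnected (g := fun n y => a n / (n + 1) * y ^ (n + 1))
      (g' := fun n y => a n * y ^ n) (u := fun n => ‖a n‖ * R ^ n) (y₀ := 0) (y := z)
      hsum (Metric.isOpen_ball (x := (0:ℂ)) (ε := R))
      (convex_ball (0:ℂ) R).isPreconnected
      (fun n y _ => ?_) (fun n y hy => ?_) (Metric.mem_ball_self hR0) ?_ ?_
  · have : ∑' n : ℕ, a n * z ^ n = f z := (htaylor z).tsum_eq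
    rwa [this] at key
  · -- HasDerivAt of each term
    have h1 : HasDerivAt (fun y : ℂ => y ^ (n + 1)) ((n + 1 : ℕ) * y ^ n) y := by
      simpa using hasDerivAt_pow (n + 1) y
    have := h1.const_mul (a n / (n + 1))
    convert this using 1
    · rfl
    have hne : ((n : ℂ) + 1) ≠ 0 := Nat.cast_add_one_ne_zero n
    field_simp
    push_cast
    ring
  · -- bound
    have hy' : ‖y‖ ≤ R := by
      have := Metric.mem_ball.mp hy
      simpa [dist_eq_norm] using this.le
    rw [norm_mul, norm_pow]
    exact mul_le_mul_of_nonneg_left (pow_le_pow_left₀ (norm_nonneg y) hy' n) (norm_nonneg _)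
  · -- summable at 0
    apply summable_of_ne_finset_zero (s := ∅)
    intro n _
    simp
  · rw [Metric.mem_ball, dist_eq_norm, sub_zero, hR]
    linarith

/-- An entire function without zeros has an entire square root. -/
lemma exists_sqrt (q : ℂ → ℂ) (hq : Differentiable ℂ q) (hq0 : ∀ z, q z ≠ 0) :
    ∃ s : ℂ → ℂ, Differentiable ℂ s ∧ ∀ z, s z ^ 2 = q z := by
  have hderiv : Differentiable ℂ (deriv q) := by
    have : AnalyticOnNhd ℂ q univ := fun z _ => hq.analyticAt z
    exact fun z => (this.deriv z (mem_univ z)).differentiableAt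
  have hw : Differentiable ℂ (fun z => deriv q z / q z) := hderiv.div hq hq0
  obtain ⟨F, hF⟩ := exists_primitive _ hw
  have hFd : Differentiable ℂ F := fun z => (hF z).differentiableAt
  -- q * exp (-F) has zero derivative
  have hG : ∀ z, HasDerivAt (fun z => q z * Complex.exp (-F z)) 0 z := by
    intro z
    have h1 : HasDerivAt (fun z => Complex.exp (-F z))
        (Complex.exp (-F z) * (-(deriv q z / q z))) z := ((hF z).neg).cexp
    have h2 := ((hq z).hasDerivAt).mul h1
    convert h2 using 1
    · rfl
    · rfl
    · rfl
    have hinv : q z * (q z)⁻¹ = 1 := mul_inv_cancel₀ (hq0 z)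
    linear_combination (deriv q z * Complex.exp (-F z)) * hinv
  have hconst : ∀ z, q z * Complex.exp (-F z) = q 0 * Complex.exp (-F 0) := by
    intro z
    exact is_const_of_deriv_eq_zero (fun z => (hG z).differentiableAt)
      (fun z => (hG z).deriv) z 0
  set c : ℂ := q 0 * Complex.exp (-F 0) with hc
  have hcne : c ≠ 0 := mul_ne_zero (hq0 0) (Complex.exp_ne_zero _)
  set d : ℂ := c ^ ((2 : ℕ) : ℂ)⁻¹ with hd
  have hd2 : d ^ 2 = c := cpow_nat_inv_pow c two_ne_zero
  refine ⟨fun z => d * Complex.exp (F z / 2), ?_, ?_⟩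
  · exact (Complex.differentiable_exp.comp (hFd.div_const 2)).const_mul d
  · intro z
    have hqz : q z = c * Complex.exp (F z) := by
      have h0 := hconst z
      have : q z * Complex.exp (-F z) * Complex.exp (F z) = c * Complex.exp (F z) := by
        rw [h0]
      rwa [mul_assoc, ← Complex.exp_add, neg_add_cancel, Complex.exp_zero, mul_one] at this
    rw [mul_pow, hd2, ← Complex.exp_nat_mul, hqz]
    ring_nf

/-- Near a simple zero, a function has no other zeros. -/
lemma eventually_ne_zero_of_simple_zero {G : ℂ → ℂ} {z₀ : ℂ} (hG : DifferentiableAt ℂ G z₀)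
    (h0 : G z₀ = 0) (hd : deriv G z₀ ≠ 0) : ∀ᶠ z in 𝓝[≠] z₀, G z ≠ 0 := by
  have hs : Tendsto (slope G z₀) (𝓝[≠] z₀) (𝓝 (deriv G z₀)) :=
    hasDerivAt_iff_tendsto_slope.mp hG.hasDerivAt
  have : ∀ᶠ z in 𝓝[≠] z₀, slope G z₀ z ≠ 0 :=
    hs (isOpen_ne.mem_nhds hd)
  filter_upwards [this, self_mem_nhdsWithin] with z hz hz'
  intro hGz
  apply hz
  simp only [slope_def_field, hGz, h0]
  simp
/-- The complement of the zero set of a function with simple zeros is dense. -/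
lemma dense_compl_zeros {G : ℂ → ℂ} (hG : Differentiable ℂ G)
    (hsimple : ∀ z, G z = 0 → deriv G z ≠ 0) : Dense {z : ℂ | G z ≠ 0} := by
  intro z₀
  by_cases h0 : G z₀ = 0
  · rw [mem_closure_iff_frequently]
    have h := eventually_ne_zero_of_simple_zero (hG z₀) h0 (hsimple z₀ h0)
    exact (h.frequently).filter_mono nhdsWithin_le_nhds
  · exact subset_closure h0

/-- Division of entire functions: if the zeros of `G` are simple and contained in the zeros of
`F`, the quotient `F/G` extends to an entire function. -/
lemma exists_quot (F G : ℂ → ℂ) (hF : Differentiable ℂ F) (hG : Differentiable ℂ G)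
    (hsimple : ∀ z, G z = 0 → deriv G z ≠ 0) (hsub : ∀ z, G z = 0 → F z = 0) :
    ∃ q : ℂ → ℂ, Differentiable ℂ q ∧ (∀ z, q z * G z = F z) ∧
      (∀ z, G z = 0 → q z = deriv F z / deriv G z) := by
  classical
  set q : ℂ → ℂ := fun z => if G z = 0 then deriv F z / deriv G z else F z / G z with hq
  have hqmul : ∀ z, q z * G z = F z := by
    intro z
    by_cases h : G z = 0
    · simp [hq, h, hsub z h]
    · simp only [hq, if_neg h]
      field_simp
  refine ⟨q, ?_, hqmul, fun z h => by simp [hq, h]⟩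
  intro z₀
  by_cases h : G z₀ = 0
  · -- use dslope
    have hev : q =ᶠ[𝓝 z₀] fun z => dslope F z₀ z / dslope G z₀ z := by
      have h1 : ∀ᶠ z in 𝓝[≠] z₀, G z ≠ 0 :=
        eventually_ne_zero_of_simple_zero (hG z₀) h (hsimple z₀ h)
      rw [eventually_nhdsWithin_iff] at h1
      filter_upwards [h1] with z hz
      by_cases hzz : z = z₀
      · subst hzz
        simp [hq, h, dslope_same]
      · have hGz : G z ≠ 0 := hz hzz
        have hsub' : z - z₀ ≠ 0 := sub_ne_zero.mpr hzz
        simp only [hq, hGz, if_neg hGz]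
        rw [dslope_of_ne _ hzz, dslope_of_ne _ hzz, slope_def_field, slope_def_field,
          hsub z₀ h, h]
        field_simp
        ring
    have hFd : DifferentiableAt ℂ (dslope F z₀) z₀ := by
      obtain ⟨p, hp⟩ := (hF.analyticAt z₀)
      exact (hp.has_fpower_series_dslope_fslope).analyticAt.differentiableAt
    have hGd : DifferentiableAt ℂ (dslope G z₀) z₀ := by
      obtain ⟨p, hp⟩ := (hG.analyticAt z₀)
      exact (hp.has_fpower_series_dslope_fslope).analyticAt.differentiableAt
    have hGne : dslope G z₀ z₀ ≠ 0 := by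
      rw [dslope_same]
      exact hsimple z₀ h
    exact (hev.differentiableAt_iff).mpr (hFd.div hGd hGne)
  · have hev : q =ᶠ[𝓝 z₀] fun z => F z / G z := by
      have : ∀ᶠ z in 𝓝 z₀, G z ≠ 0 :=
        (hG z₀).continuousAt.eventually_ne h
      filter_upwards [this] with z hz
      simp [hq, hz]
    exact (hev.differentiableAt_iff).mpr ((hF z₀).div (hG z₀) h)

/-- An injective entire function has nowhere-vanishing derivative. -/
lemma deriv_ne_zero_of_injective {t : ℂ → ℂ} (ht : Differentiable ℂ t)
    (hinj : Function.Injective t) : ∀ z₀, deriv t z₀ ≠ 0 := by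
  intro z₀ hd0
  set F : ℂ → ℂ := fun z => t z - t z₀ with hFdef
  have hFa : AnalyticAt ℂ F z₀ := (ht.analyticAt z₀).sub analyticAt_const
  have hF0 : F z₀ = 0 := sub_self _
  have hFderiv : deriv F z₀ = 0 := by
    rw [hFdef, deriv_sub_const]; exact hd0
  -- the order of F at z₀ is a finite natural number n ≥ 2
  have horder_ne_top : analyticOrderAt F z₀ ≠ ⊤ := by
    intro htop
    rw [analyticOrderAt_eq_top] at htop
    have : ∀ᶠ z in 𝓝[≠] z₀, F z = 0 := htop.filter_mono nhdsWithin_le_nhds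
    obtain ⟨z, hz, hzne⟩ := (this.and self_mem_nhdsWithin).exists
    exact hzne (hinj (by rwa [hFdef, sub_eq_zero] at hz))
  obtain ⟨n, hn⟩ : ∃ n : ℕ, analyticOrderAt F z₀ = n := by
    cases' h : analyticOrderAt F z₀ with n
    · exact absurd h horder_ne_top
    · exact ⟨n, rfl⟩
  obtain ⟨g, hga, hg0, hgev⟩ := (hFa.analyticOrderAt_eq_natCast).mp hn
  have hgev' : ∀ᶠ z in 𝓝 z₀, F z = (z - z₀) ^ n * g z := by
    filter_upwards [hgev] with z hz
    simpa [smul_eq_mul] using hz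
  have hn0 : n ≠ 0 := by
    intro h
    subst h
    have := hgev'.self_of_nhds
    simp only [pow_zero, one_mul] at this
    rw [hF0] at this
    exact hg0 this.symm
  have hn1 : n ≠ 1 := by
    intro h
    subst h
    have hd : HasDerivAt (fun z => (z - z₀) ^ 1 * g z) (g z₀) z₀ := by
      have h1 : HasDerivAt (fun z : ℂ => (z - z₀) ^ 1) 1 z₀ := by
        simpa using ((hasDerivAt_id z₀).sub_const (z₀ : ℂ))
      have := h1.mul hga.differentiableAt.hasDerivAt
      convert this using 1
      · rfl
      · rfl
      · rfl
      simp
    have : deriv F z₀ = g z₀ := by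
      rw [Filter.EventuallyEq.deriv_eq hgev']
      exact hd.deriv
    rw [hFderiv] at this
    exact hg0 this.symm
  have hn2 : 1 < n := by omega
  -- local n-th root of g
  set c : ℂ := g z₀ with hc
  set d : ℂ := c ^ ((n : ℂ))⁻¹ with hd
  have hdn : d ^ n = c := by
    rw [hd]
    exact_mod_cast cpow_nat_inv_pow c hn0
  have hdne : d ≠ 0 := by
    intro h
    apply hg0
    rw [← hdn, h]
    exact zero_pow hn0
  set r : ℂ → ℂ := fun z => d * Complex.exp (Complex.log (g z / c) / n) with hr
  have hgc : Tendsto (fun z => g z / c) (𝓝 z₀) (𝓝 1) := by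
    have := hga.continuousAt.tendsto
    have h2 := this.div_const c
    rwa [← hc, div_self hg0] at h2
  have hslit : ∀ᶠ z in 𝓝 z₀, g z / c ∈ slitPlane :=
    hgc (isOpen_slitPlane.mem_nhds one_mem_slitPlane)
  have hrn : ∀ᶠ z in 𝓝 z₀, r z ^ n = g z := by
    filter_upwards [hslit] with z hz
    have hne : g z / c ≠ 0 := slitPlane_ne_zero hz
    rw [hr]
    rw [mul_pow, hdn, ← Complex.exp_nat_mul, mul_div_cancel₀ _ (by exact_mod_cast hn0 : (n : ℂ) ≠ 0),
      Complex.exp_log hne]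
    field_simp
  have hrz₀ : r z₀ = d := by
    rw [hr]
    simp [← hc, div_self hg0, Complex.log_one]
  -- r is analytic at z₀
  have hra : AnalyticAt ℂ r z₀ := by
    have h1 : AnalyticAt ℂ (fun z => g z / c) z₀ := hga.div analyticAt_const hg0
    have h2 : AnalyticAt ℂ (fun z => Complex.log (g z / c)) z₀ :=
      h1.clog (by rw [← hc, div_self hg0]; exact one_mem_slitPlane)
    have h3 : AnalyticAt ℂ (fun z => Complex.log (g z / c) / n) z₀ := h2.div analyticAt_const
      (by exact_mod_cast hn0)
    exact analyticAt_const.mul (analyticAt_cexp.comp h3)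
  set φ : ℂ → ℂ := fun z => (z - z₀) * r z with hφ
  have hφ0 : φ z₀ = 0 := by simp [hφ]
  have hφstrict : HasStrictDerivAt φ d z₀ := by
    have h1 : HasStrictDerivAt (fun z : ℂ => z - z₀) 1 z₀ :=
      (hasStrictDerivAt_id z₀).sub_const _
    have h2 : HasStrictDerivAt r (deriv r z₀) z₀ :=
      (hra.contDiffAt (n := 1)).hasStrictDerivAt one_ne_zero
    have := h1.mul h2
    convert this using 1
    · rfl
    · rfl
    · rfl
    rw [hrz₀]
    ring
  have hmap : map φ (𝓝 z₀) = 𝓝 0 := by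
    have := hφstrict.map_nhds_eq hdne
    rwa [hφ0] at this
  -- pick two distinct preimages
  set E : Set ℂ := {z | F z = (z - z₀) ^ n * g z ∧ r z ^ n = g z} with hE
  have hEmem : E ∈ 𝓝 z₀ := by
    filter_upwards [hgev', hrn] with z h1 h2
    exact ⟨h1, h2⟩
  have hVmem : φ '' E ∈ 𝓝 (0 : ℂ) := by
    rw [← hmap]
    exact Filter.image_mem_map hEmem
  set ζ : ℂ := Complex.exp (2 * Real.pi * Complex.I / n) with hζdef
  have hζ : IsPrimitiveRoot ζ n := Complex.isPrimitiveRoot_exp n hn0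
  have hζn : ζ ^ n = 1 := hζ.pow_eq_one
  have hζ1 : ζ ≠ 1 := hζ.ne_one hn2
  have hWmem : (φ '' E) ∩ ((fun w => ζ * w) ⁻¹' (φ '' E)) ∈ 𝓝 (0 : ℂ) := by
    refine inter_mem hVmem ?_
    have hcont : Tendsto (fun w : ℂ => ζ * w) (𝓝 0) (𝓝 0) := by
      have := (continuous_mul_left ζ).tendsto (0 : ℂ)
      rwa [mul_zero] at this
    exact hcont hVmem
  obtain ⟨w, hwW, hw0⟩ := Filter.nonempty_of_mem
    (inter_mem (mem_nhdsWithin_of_mem_nhds hWmem) (self_mem_nhdsWithin (s := {(0:ℂ)}ᶜ)))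
  obtain ⟨z₁, hz₁E, hφ₁⟩ := hwW.1
  obtain ⟨z₂, hz₂E, hφ₂⟩ := hwW.2
  have htz : ∀ z ∈ E, t z = t z₀ + φ z ^ n := by
    intro z hz
    have h1 : φ z ^ n = (z - z₀) ^ n * r z ^ n := mul_pow _ _ _
    have h2 := hz.1
    have h3 := hz.2
    simp only [hFdef] at h2
    rw [← h3, ← h1] at h2
    linear_combination h2
  simp only [Set.mem_compl_iff, Set.mem_singleton_iff] at hw0
  have h₁ : t z₁ = t z₀ + w ^ n := by rw [htz z₁ hz₁E, hφ₁]
  have h₂ : t z₂ = t z₀ + w ^ n := by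
    rw [htz z₂ hz₂E, hφ₂, mul_pow, hζn, one_mul]
  have hz12 : z₁ = z₂ := hinj (by rw [h₁, h₂])
  rw [hz12, hφ₂] at hφ₁
  have hzw : (ζ - 1) * w = 0 := by linear_combination hφ₁
  rcases mul_eq_zero.mp hzw with hcase | hcase
  · exact hζ1 (by linear_combination hcase)
  · exact hw0 hcase

/-- The inverse of a bijective entire function is entire. -/
lemma invFun_differentiable {t : ℂ → ℂ} (ht : Differentiable ℂ t)
    (htb : Function.Bijective t) : Differentiable ℂ (Function.invFun t) := by
  set τ := Function.invFun t with hτ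
  have hleft : Function.LeftInverse τ t := Function.leftInverse_invFun htb.injective
  have hright : Function.RightInverse τ t := Function.rightInverse_invFun htb.surjective
  intro w
  obtain ⟨a, rfl⟩ := htb.surjective w
  have hst : HasStrictDerivAt t (deriv t a) a :=
    ((ht.contDiff (n := 1)).contDiffAt).hasStrictDerivAt one_ne_zero
  have hd : deriv t a ≠ 0 := deriv_ne_zero_of_injective ht htb.injective a
  have hloc := hst.localInverse t (deriv t a) a hd
  have hev : ∀ᶠ y in 𝓝 (t a), t ((hst.hasStrictFDerivAt_equiv hd).localInverse t _ a y) = y :=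
    (hst.hasStrictFDerivAt_equiv hd).eventually_right_inverse
  have hloc_diff : DifferentiableAt ℂ ((hst.hasStrictFDerivAt_equiv hd).localInverse t _ a) (t a) :=
    HasStrictFDerivAt.differentiableAt (hst.to_localInverse hd)
  have heq : τ =ᶠ[𝓝 (t a)] (hst.hasStrictFDerivAt_equiv hd).localInverse t _ a := by
    filter_upwards [hev] with y hy
    calc τ y = τ (t ((hst.hasStrictFDerivAt_equiv hd).localInverse t _ a y)) := by rw [hy]
    _ = (hst.hasStrictFDerivAt_equiv hd).localInverse t _ a y := hleft _
  exact (heq.differentiableAt_iff).mpr hloc_diff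

/-- A continuous function whose square is `1` on a dense set is constantly `1` or `-1`. -/
lemma const_sign {E : ℂ → ℂ} (hE : Continuous E) {D : Set ℂ} (hD : Dense D)
    (hsq : ∀ z ∈ D, E z ^ 2 = 1) : (∀ z, E z = 1) ∨ (∀ z, E z = -1) := by
  have hsq' : ∀ z, E z ^ 2 = 1 := by
    have hclosed : IsClosed {z : ℂ | E z ^ 2 = 1} :=
      isClosed_eq (by fun_prop) continuous_const
    have : closure D ⊆ {z : ℂ | E z ^ 2 = 1} := hclosed.closure_subset_iff.mpr hsq
    rw [hD.closure_eq] at this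
    exact fun z => this (mem_univ z)
  have hpm : ∀ z, E z = 1 ∨ E z = -1 := by
    intro z
    have := hsq' z
    have h2 : (E z - 1) * (E z + 1) = 0 := by linear_combination this
    rcases mul_eq_zero.mp h2 with h | h
    · left; linear_combination h
    · right; linear_combination h
  have hclopen : IsClopen {z : ℂ | E z = 1} := by
    constructor
    · exact isClosed_eq hE continuous_const
    · rw [isOpen_iff_mem_nhds]
      intro z hz
      have hcont : ∀ᶠ w in 𝓝 z, E w ∈ Metric.ball (1 : ℂ) 1 := by
        apply hE.continuousAt.preimage_mem_nhds
        rw [hz]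
        exact Metric.ball_mem_nhds _ one_pos
      filter_upwards [hcont] with w hw
      rcases hpm w with h | h
      · exact h
      · exfalso
        rw [h] at hw
        rw [Metric.mem_ball, dist_eq_norm] at hw
        norm_num at hw
  rcases isClopen_iff.mp hclopen with h | h
  · right
    intro z
    rcases hpm z with h1 | h1
    · exfalso
      have : z ∈ {z : ℂ | E z = 1} := h1
      rw [h] at this
      exact this
    · exact h1
  · left
    intro z
    have : z ∈ {z : ℂ | E z = 1} := by rw [h]; trivial
    exact this

end HypAux

/-- 'necessary condition' direction of Theorem 4.5.
Let `f` be entire with infinite zero set and simple zeros, and `g, h` entire with simple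
zeros whose zero sets `A = g⁻¹(0)` and `B = h⁻¹(0)` are nonempty subsets of `f⁻¹(0)`, each
either infinite or finite of even cardinality.  If there is a bijective holomorphic map
`t : ℂ → ℂ` with `t(f⁻¹(0)) = f⁻¹(0)` and `t(A) = B`, then there is a homeomorphism
`T : S(f,g) → S(f,h)` carrying the singular locus onto the singular locus. -/
theorem isomorphic_singular_fiber_products
    (f g h : ℂ → ℂ) (hf : Differentiable ℂ f) (hg : Differentiable ℂ g)
    (hh : Differentiable ℂ h)
    (hfzero : (f ⁻¹' {0}).Infinite)
    (hfsimple : ∀ z, f z = 0 → deriv f z ≠ 0)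
    (hgsimple : ∀ z, g z = 0 → deriv g z ≠ 0)
    (hhsimple : ∀ z, h z = 0 → deriv h z ≠ 0)
    (hA : (g ⁻¹' {0}).Nonempty) (hAf : g ⁻¹' {0} ⊆ f ⁻¹' {0})
    (hB : (h ⁻¹' {0}).Nonempty) (hBf : h ⁻¹' {0} ⊆ f ⁻¹' {0})
    (hAcard : (g ⁻¹' {0}).Infinite ∨
      ((g ⁻¹' {0}).Finite ∧ Even (g ⁻¹' {0}).ncard))
    (hBcard : (h ⁻¹' {0}).Infinite ∨
      ((h ⁻¹' {0}).Finite ∧ Even (h ⁻¹' {0}).ncard))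
    (t : ℂ → ℂ) (ht : Differentiable ℂ t) (htb : Function.Bijective t)
    (htf : t '' (f ⁻¹' {0}) = f ⁻¹' {0})
    (htA : t '' (g ⁻¹' {0}) = h ⁻¹' {0}) :
    ∃ T : HypFiberProd f g ≃ₜ HypFiberProd f h,
      T '' {u : HypFiberProd f g | g (u : ℂ × ℂ × ℂ).1 = 0} =
        {v : HypFiberProd f h | h (v : ℂ × ℂ × ℂ).1 = 0} := by
  classical
  set τ : ℂ → ℂ := Function.invFun t with hτdef
  have hleft : Function.LeftInverse τ t := Function.leftInverse_invFun htb.injective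
  have hright : Function.RightInverse τ t := Function.rightInverse_invFun htb.surjective
  have hτd : Differentiable ℂ τ := invFun_differentiable ht htb
  have hτb : Function.Bijective τ :=
    Function.bijective_iff_has_inverse.mpr ⟨t, hright, hleft⟩
  -- zero set transfer
  have ht1 : ∀ z, f z = 0 → f (t z) = 0 := by
    intro z hz
    have : t z ∈ t '' (f ⁻¹' {0}) := ⟨z, by simpa using hz, rfl⟩
    rw [htf] at this
    simpa using this
  have ht2 : ∀ z, f (t z) = 0 → f z = 0 := by
    intro z hz
    have : t z ∈ f ⁻¹' {0} := by simpa using hz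
    rw [← htf] at this
    obtain ⟨x, hx, hxe⟩ := this
    rw [htb.injective hxe] at hx
    simpa using hx
  have ht3 : ∀ z, g z = 0 → h (t z) = 0 := by
    intro z hz
    have : t z ∈ t '' (g ⁻¹' {0}) := ⟨z, by simpa using hz, rfl⟩
    rw [htA] at this
    simpa using this
  have ht4 : ∀ z, h (t z) = 0 → g z = 0 := by
    intro z hz
    have : t z ∈ h ⁻¹' {0} := by simpa using hz
    rw [← htA] at this
    obtain ⟨x, hx, hxe⟩ := this
    rw [htb.injective hxe] at hx
    simpa using hx
  have hτ1 : ∀ z, f z = 0 → f (τ z) = 0 := by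
    intro z hz
    have : z ∈ f ⁻¹' {0} := by simpa using hz
    rw [← htf] at this
    obtain ⟨x, hx, hxe⟩ := this
    rw [← hxe, hleft x]
    simpa using hx
  have hτ2 : ∀ z, f (τ z) = 0 → f z = 0 := by
    intro z hz
    have := ht1 _ hz
    rwa [hright z] at this
  have hτ3 : ∀ z, h z = 0 → g (τ z) = 0 := by
    intro z hz
    have : z ∈ h ⁻¹' {0} := by simpa using hz
    rw [← htA] at this
    obtain ⟨x, hx, hxe⟩ := this
    rw [← hxe, hleft x]
    simpa using hx
  have hτ4 : ∀ z, g (τ z) = 0 → h z = 0 := by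
    intro z hz
    have := ht3 _ hz
    rwa [hright z] at this
  -- derivatives nonzero
  have hdt : ∀ z, deriv t z ≠ 0 := deriv_ne_zero_of_injective ht htb.injective
  have hdτ : ∀ z, deriv τ z ≠ 0 := deriv_ne_zero_of_injective hτd hτb.injective
  -- chain rule helper
  have hcomp : ∀ (F₁ F₂ : ℂ → ℂ), Differentiable ℂ F₁ → Differentiable ℂ F₂ →
      ∀ z, deriv (fun z => F₁ (F₂ z)) z = deriv F₁ (F₂ z) * deriv F₂ z := by
    intro F₁ F₂ h1 h2 z
    have := deriv_comp (x := z) (h1 (F₂ z)) (h2 z)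
    exact this
  -- the four quotients
  obtain ⟨q₁, hq₁d, hq₁mul, hq₁z⟩ := exists_quot (fun z => f (t z)) f
    (fun z => DifferentiableAt.comp z (hf (t z)) (ht z)) hf hfsimple ht1
  obtain ⟨q₂, hq₂d, hq₂mul, hq₂z⟩ := exists_quot (fun z => h (t z)) g
    (fun z => DifferentiableAt.comp z (hh (t z)) (ht z)) hg hgsimple ht3
  obtain ⟨q₃, hq₃d, hq₃mul, hq₃z⟩ := exists_quot (fun z => f (τ z)) f
    (fun z => DifferentiableAt.comp z (hf (τ z)) (hτd z)) hf hfsimple hτ1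
  obtain ⟨q₄, hq₄d, hq₄mul, hq₄z⟩ := exists_quot (fun z => g (τ z)) h
    (fun z => DifferentiableAt.comp z (hg (τ z)) (hτd z)) hh hhsimple hτ3
  -- nonvanishing
  have hq₁0 : ∀ z, q₁ z ≠ 0 := by
    intro z
    by_cases hz : f z = 0
    · rw [hq₁z z hz, hcomp f t hf ht]
      exact div_ne_zero (mul_ne_zero (hfsimple _ (ht1 z hz)) (hdt z)) (hfsimple z hz)
    · intro h0
      have := hq₁mul z
      rw [h0, zero_mul] at this
      exact hz (ht2 z this.symm)
  have hq₂0 : ∀ z, q₂ z ≠ 0 := by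
    intro z
    by_cases hz : g z = 0
    · rw [hq₂z z hz, hcomp h t hh ht]
      exact div_ne_zero (mul_ne_zero (hhsimple _ (ht3 z hz)) (hdt z)) (hgsimple z hz)
    · intro h0
      have := hq₂mul z
      rw [h0, zero_mul] at this
      exact hz (ht4 z this.symm)
  have hq₃0 : ∀ z, q₃ z ≠ 0 := by
    intro z
    by_cases hz : f z = 0
    · rw [hq₃z z hz, hcomp f τ hf hτd]
      exact div_ne_zero (mul_ne_zero (hfsimple _ (hτ1 z hz)) (hdτ z)) (hfsimple z hz)
    · intro h0
      have := hq₃mul z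
      rw [h0, zero_mul] at this
      exact hz (hτ2 z this.symm)
  have hq₄0 : ∀ z, q₄ z ≠ 0 := by
    intro z
    by_cases hz : h z = 0
    · rw [hq₄z z hz, hcomp g τ hg hτd]
      exact div_ne_zero (mul_ne_zero (hgsimple _ (hτ3 z hz)) (hdτ z)) (hhsimple z hz)
    · intro h0
      have := hq₄mul z
      rw [h0, zero_mul] at this
      exact hz (hτ4 z this.symm)
  -- square roots
  obtain ⟨s₁, hs₁d, hs₁sq⟩ := exists_sqrt q₁ hq₁d hq₁0
  obtain ⟨s₂, hs₂d, hs₂sq⟩ := exists_sqrt q₂ hq₂d hq₂0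
  obtain ⟨s₃, hs₃d, hs₃sq⟩ := exists_sqrt q₃ hq₃d hq₃0
  obtain ⟨s₄, hs₄d, hs₄sq⟩ := exists_sqrt q₄ hq₄d hq₄0
  -- sign normalization for (s₁, s₃)
  have hsign₁ : (∀ z, s₁ z * s₃ (t z) = 1) ∨ (∀ z, s₁ z * s₃ (t z) = -1) := by
    apply const_sign (hs₁d.continuous.mul (hs₃d.continuous.comp ht.continuous))
      (dense_compl_zeros hf hfsimple)
    intro z hz
    have hz' : f z ≠ 0 := hz
    have hft : f (t z) ≠ 0 := fun h0 => hz' (ht2 z h0)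
    have e1 : q₁ z = f (t z) / f z := (eq_div_iff hz').mpr (hq₁mul z)
    have e2 : q₃ (t z) = f z / f (t z) := by
      refine (eq_div_iff hft).mpr ?_
      rw [hq₃mul (t z), hleft z]
    show (s₁ z * s₃ (t z)) ^ 2 = 1
    rw [mul_pow, hs₁sq, hs₃sq, e1, e2]
    field_simp
  have hsign₂ : (∀ z, s₂ z * s₄ (t z) = 1) ∨ (∀ z, s₂ z * s₄ (t z) = -1) := by
    apply const_sign (hs₂d.continuous.mul (hs₄d.continuous.comp ht.continuous))
      (dense_compl_zeros hg hgsimple)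
    intro z hz
    have hz' : g z ≠ 0 := hz
    have hht : h (t z) ≠ 0 := fun h0 => hz' (ht4 z h0)
    have e1 : q₂ z = h (t z) / g z := (eq_div_iff hz').mpr (hq₂mul z)
    have e2 : q₄ (t z) = g z / h (t z) := by
      refine (eq_div_iff hht).mpr ?_
      rw [hq₄mul (t z), hleft z]
    show (s₂ z * s₄ (t z)) ^ 2 = 1
    rw [mul_pow, hs₂sq, hs₄sq, e1, e2]
    field_simp
  obtain ⟨ε₁, hε₁sq, hε₁⟩ : ∃ ε : ℂ, ε ^ 2 = 1 ∧ ∀ z, s₁ z * s₃ (t z) = ε := by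
    rcases hsign₁ with h1 | h1
    · exact ⟨1, by norm_num, h1⟩
    · exact ⟨-1, by norm_num, h1⟩
  obtain ⟨ε₂, hε₂sq, hε₂⟩ : ∃ ε : ℂ, ε ^ 2 = 1 ∧ ∀ z, s₂ z * s₄ (t z) = ε := by
    rcases hsign₂ with h1 | h1
    · exact ⟨1, by norm_num, h1⟩
    · exact ⟨-1, by norm_num, h1⟩
  set s₃' : ℂ → ℂ := fun z => ε₁ * s₃ z with hs₃'def
  set s₄' : ℂ → ℂ := fun z => ε₂ * s₄ z with hs₄'def
  have hs₃'sq : ∀ z, s₃' z ^ 2 = q₃ z := by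
    intro z
    rw [hs₃'def]
    simp only
    rw [mul_pow, hε₁sq, one_mul, hs₃sq]
  have hs₄'sq : ∀ z, s₄' z ^ 2 = q₄ z := by
    intro z
    rw [hs₄'def]
    simp only
    rw [mul_pow, hε₂sq, one_mul, hs₄sq]
  have hA1 : ∀ z, s₁ z * s₃' (t z) = 1 := by
    intro z
    rw [hs₃'def]
    simp only
    rw [mul_comm ε₁ (s₃ (t z)), ← mul_assoc, hε₁ z, ← sq, hε₁sq]
  have hB1 : ∀ z, s₂ z * s₄' (t z) = 1 := by
    intro z
    rw [hs₄'def]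
    simp only
    rw [mul_comm ε₂ (s₄ (t z)), ← mul_assoc, hε₂ z, ← sq, hε₂sq]
  have hA2 : ∀ w, s₃' w * s₁ (τ w) = 1 := by
    intro w
    have := hA1 (τ w)
    rw [hright w] at this
    rw [mul_comm]
    exact this
  have hB2 : ∀ w, s₄' w * s₂ (τ w) = 1 := by
    intro w
    have := hB1 (τ w)
    rw [hright w] at this
    rw [mul_comm]
    exact this
  -- the equivalence
  have memT : ∀ u : ℂ × ℂ × ℂ, u.2.1 ^ 2 = f u.1 ∧ u.2.2 ^ 2 = g u.1 →
      (u.2.1 * s₁ u.1) ^ 2 = f (t u.1) ∧ (u.2.2 * s₂ u.1) ^ 2 = h (t u.1) := by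
    rintro ⟨z₁, z₂, z₃⟩ ⟨h1, h2⟩
    constructor
    · simp only at h1 ⊢
      rw [mul_pow, h1, hs₁sq, mul_comm, hq₁mul]
    · simp only at h2 ⊢
      rw [mul_pow, h2, hs₂sq, mul_comm, hq₂mul]
  have memT' : ∀ v : ℂ × ℂ × ℂ, v.2.1 ^ 2 = f v.1 ∧ v.2.2 ^ 2 = h v.1 →
      (v.2.1 * s₃' v.1) ^ 2 = f (τ v.1) ∧ (v.2.2 * s₄' v.1) ^ 2 = g (τ v.1) := by
    rintro ⟨z₁, z₂, z₃⟩ ⟨h1, h2⟩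
    constructor
    · simp only at h1 ⊢
      rw [mul_pow, h1, hs₃'sq, mul_comm, hq₃mul]
    · simp only at h2 ⊢
      rw [mul_pow, h2, hs₄'sq, mul_comm, hq₄mul]
  set Teq : HypFiberProd f g ≃ HypFiberProd f h :=
    { toFun := fun u => ⟨(t u.val.1, u.val.2.1 * s₁ u.val.1, u.val.2.2 * s₂ u.val.1),
        memT u.val u.property⟩
      invFun := fun v => ⟨(τ v.val.1, v.val.2.1 * s₃' v.val.1, v.val.2.2 * s₄' v.val.1),
        memT' v.val v.property⟩
      left_inv := by
        rintro ⟨⟨z₁, z₂, z₃⟩, hu⟩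
        apply Subtype.ext
        show (τ (t z₁), z₂ * s₁ z₁ * s₃' (t z₁), z₃ * s₂ z₁ * s₄' (t z₁)) = (z₁, z₂, z₃)
        rw [hleft z₁, mul_assoc, hA1 z₁, mul_one, mul_assoc, hB1 z₁, mul_one]
      right_inv := by
        rintro ⟨⟨z₁, z₂, z₃⟩, hv⟩
        apply Subtype.ext
        show (t (τ z₁), z₂ * s₃' z₁ * s₁ (τ z₁), z₃ * s₄' z₁ * s₂ (τ z₁)) = (z₁, z₂, z₃)
        rw [hright z₁, mul_assoc, hA2 z₁, mul_one, mul_assoc, hB2 z₁, mul_one] } with hTeq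
  have c1 : Continuous fun u : HypFiberProd f g => (u : ℂ × ℂ × ℂ).1 :=
    continuous_fst.comp continuous_subtype_val
  have c2 : Continuous fun u : HypFiberProd f g => (u : ℂ × ℂ × ℂ).2.1 :=
    (continuous_fst.comp continuous_snd).comp continuous_subtype_val
  have c3 : Continuous fun u : HypFiberProd f g => (u : ℂ × ℂ × ℂ).2.2 :=
    (continuous_snd.comp continuous_snd).comp continuous_subtype_val
  have d1 : Continuous fun v : HypFiberProd f h => (v : ℂ × ℂ × ℂ).1 :=
    continuous_fst.comp continuous_subtype_val
  have d2 : Continuous fun v : HypFiberProd f h => (v : ℂ × ℂ × ℂ).2.1 :=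
    (continuous_fst.comp continuous_snd).comp continuous_subtype_val
  have d3 : Continuous fun v : HypFiberProd f h => (v : ℂ × ℂ × ℂ).2.2 :=
    (continuous_snd.comp continuous_snd).comp continuous_subtype_val
  have hs₃'c : Continuous s₃' := continuous_const.mul hs₃d.continuous
  have hs₄'c : Continuous s₄' := continuous_const.mul hs₄d.continuous
  set T : HypFiberProd f g ≃ₜ HypFiberProd f h :=
    { toEquiv := Teq
      continuous_toFun := by
        apply Continuous.subtype_mk
        exact (ht.continuous.comp c1).prodMk
          ((c2.mul (hs₁d.continuous.comp c1)).prodMk (c3.mul (hs₂d.continuous.comp c1)))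
      continuous_invFun := by
        apply Continuous.subtype_mk
        exact (hτd.continuous.comp d1).prodMk
          ((d2.mul (hs₃'c.comp d1)).prodMk (d3.mul (hs₄'c.comp d1))) } with hT
  refine ⟨T, ?_⟩
  ext v
  simp only [Set.mem_image, Set.mem_setOf_eq]
  constructor
  · rintro ⟨u, hu, rfl⟩
    exact ht3 _ hu
  · intro hv
    refine ⟨T.symm v, ?_, T.apply_symm_apply v⟩
    exact hτ3 _ hv
end
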